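/- In the normal game on the 1×n board with target string SOO = [S,O,O], for every n the game is a draw: each player can force at least a draw, so neither player can force a win. -/

import Mathlib

/-- The two letters of the SOS game. -/
inductive Letter : Type
  | S : Letter
  | O : Letter
  deriving DecidableEq

open Letter

/-- The target string `t` occurs left-to-right as a consecutive block on the
linear board `b`. -/
def Achieves {n : ℕ} (t : List Letter) (b : Fin n → Option Letter) : Prop :=
  ∃ i : ℕ, ∀ j : ℕ, (hj : j < t.length) → ∃ h : i + j < n,
    b ⟨i + j, h⟩ = some (t.get ⟨j, hj⟩)

/-- `Force Win m w b`: the player to move in position `b` (with `m` remaining moves,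
i.e. `m` empty cells) can force a win when `w = true`, resp. can force at least a
draw when `w = false`, in the normal game whose winning boards are given by `Win`
(a player wins if the board satisfies `Win` immediately after their move). -/
def Force {α : Type} [DecidableEq α] (Win : (α → Option Letter) → Prop) :
    ℕ → Bool → (α → Option Letter) → Prop
  | 0, w, _ => w = false
  | m + 1, w, b => ∃ i : α, ∃ x : Letter, b i = none ∧
      (Win (Function.update b i (some x)) ∨
        ¬ Force Win m (!w) (Function.update b i (some x)))

/-- The first player can force a win in the normal game with target `t`
on the (initially empty) 1×n board. -/
def FirstWins (t : List Letter) (n : ℕ) : Prop :=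
  Force (Achieves t) n true (fun _ : Fin n => none)

/-- The second player can force a win in the normal game with target `t`
on the (initially empty) 1×n board: the first player (to move) cannot even
force a draw. -/
def SecondWins (t : List Letter) (n : ℕ) : Prop :=
  ¬ Force (Achieves t) n false (fun _ : Fin n => none)

/-- The normal game with target `t` on the 1×n board is a draw under optimal
play: the first player can force at least a draw, and the second player can
force at least a draw (i.e. the first player cannot force a win). -/
def IsDraw (t : List Letter) (n : ℕ) : Prop :=
  Force (Achieves t) n false (fun _ : Fin n => none) ∧
    ¬ Force (Achieves t) n true (fun _ : Fin n => none)

section Aux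

open Letter

lemma ach_iff {n : ℕ} (b : Fin n → Option Letter) :
    Achieves [S, O, O] b ↔ ∃ p : ℕ, ∃ h : p + 2 < n,
      b ⟨p, by omega⟩ = some S ∧ b ⟨p+1, by omega⟩ = some O ∧ b ⟨p+2, by omega⟩ = some O := by
  constructor
  · rintro ⟨p, hp⟩
    obtain ⟨h0, e0⟩ := hp 0 (by norm_num)
    obtain ⟨h1, e1⟩ := hp 1 (by norm_num)
    obtain ⟨h2, e2⟩ := hp 2 (by norm_num)
    refine ⟨p, h2, ?_, ?_, ?_⟩
    · simpa using e0
    · simpa using e1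
    · simpa using e2
  · rintro ⟨p, h, e0, e1, e2⟩
    refine ⟨p, ?_⟩
    intro j hj
    have hj3 : j < 3 := by simpa using hj
    interval_cases j
    · exact ⟨by omega, by simpa using e0⟩
    · exact ⟨by omega, by simpa using e1⟩
    · exact ⟨by omega, by simpa using e2⟩

lemma upd_mk {n : ℕ} (b : Fin n → Option Letter) (i : Fin n) (v : Option Letter)
    (q : ℕ) (hq : q < n) :
    Function.update b i v ⟨q, hq⟩ = if q = i.val then v else b ⟨q, hq⟩ := by
  by_cases h : q = i.val
  · rw [if_pos h]
    have : (⟨q, hq⟩ : Fin n) = i := Fin.ext h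
    rw [this, Function.update_self]
  · rw [if_neg h, Function.update_of_ne (by simp [Fin.ext_iff, h])]

def Safe {n : ℕ} (b : Fin n → Option Letter) : Prop :=
  ¬ Achieves [S,O,O] b ∧
  ∀ i x, b i = none → ¬ Achieves [S,O,O] (Function.update b i (some x))

def ECount {n : ℕ} (b : Fin n → Option Letter) : ℕ :=
  (Finset.univ.filter (fun i => b i = none)).card

lemma ecount_update {n : ℕ} {b : Fin n → Option Letter} {i : Fin n}
    (hi : b i = none) (x : Letter) :
    ECount (Function.update b i (some x)) + 1 = ECount b := by
  classical
  have hset : (Finset.univ.filter fun j => Function.update b i (some x) j = none)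
      = (Finset.univ.filter fun j => b j = none).erase i := by
    ext j
    by_cases h : j = i <;> simp [Function.update_apply, h, hi]
  have hmem : i ∈ (Finset.univ.filter fun j : Fin n => b j = none) := by simp [hi]
  have hpos : 0 < (Finset.univ.filter fun j : Fin n => b j = none).card :=
    Finset.card_pos.mpr ⟨i, hmem⟩
  rw [ECount, hset, Finset.card_erase_of_mem hmem, ECount]
  omega

lemma exists_max_empty {n : ℕ} {b : Fin n → Option Letter} (h : 0 < ECount b) :
    ∃ i : Fin n, b i = none ∧ ∀ j : Fin n, i < j → b j ≠ none := by
  classical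
  have hne : (Finset.univ.filter fun j : Fin n => b j = none).Nonempty :=
    Finset.card_pos.mp h
  refine ⟨Finset.max' _ hne, ?_, ?_⟩
  · have := Finset.max'_mem _ hne
    simpa using this
  · intro j hlt hj
    have hjm : j ∈ (Finset.univ.filter fun j : Fin n => b j = none) := by simp [hj]
    exact absurd hlt (not_lt.mpr (Finset.le_max' _ j hjm))

lemma key {n : ℕ} {b : Fin n → Option Letter} (hs : Safe b) {i : Fin n}
    (hi : b i = none) (hmax : ∀ j : Fin n, i < j → b j ≠ none) :
    Safe (Function.update b i (some S)) := by
  classical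
  obtain ⟨hnw, hnm⟩ := hs
  refine ⟨hnm i S hi, ?_⟩
  intro j y hj hach
  have hji : j ≠ i := by
    intro he; rw [he, Function.update_self] at hj; exact nomatch hj
  have hbj : b j = none := by
    rwa [Function.update_of_ne hji] at hj
  have hij : i.val ≠ j.val := fun h => hji (Fin.ext h.symm)
  rw [ach_iff] at hach
  obtain ⟨p, h, e0, e1, e2⟩ := hach
  rw [upd_mk, upd_mk] at e0 e1 e2
  -- i cannot sit at p+1 or p+2 (it holds S, needs O)
  have hi1 : i.val ≠ p + 1 := by
    intro he
    rw [if_neg (by omega), if_pos he.symm] at e1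
    simp at e1
  have hi2 : i.val ≠ p + 2 := by
    intro he
    rw [if_neg (by omega), if_pos he.symm] at e2
    simp at e2
  by_cases hj0 : p = j.val
  · -- j sits at p, so y = S ; then (j, y) was already winning in b
    have hy : y = S := by rw [if_pos hj0] at e0; exact Option.some_injective _ e0
    by_cases hi1' : p + 1 = i.val
    · omega
    by_cases hi2' : p + 2 = i.val
    · omega
    rw [if_neg (by omega), if_neg hi1'] at e1
    rw [if_neg (by omega), if_neg hi2'] at e2
    apply hnm j y hbj
    rw [ach_iff]
    refine ⟨p, h, ?_, ?_, ?_⟩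
    · rw [upd_mk, if_pos hj0, hy]
    · rwa [upd_mk, if_neg (by omega)]
    · rwa [upd_mk, if_neg (by omega)]
  · by_cases hi0 : p = i.val
    · -- i sits at p; then j cannot sit at p+1 or p+2 (those are > i, hence filled)
      rw [if_neg hj0, if_pos hi0] at e0
      by_cases hj1 : p + 1 = j.val
      · exact hmax j (by rw [Fin.lt_def]; omega) hbj
      by_cases hj2 : p + 2 = j.val
      · exact hmax j (by rw [Fin.lt_def]; omega) hbj
      rw [if_neg hj1, if_neg (by omega)] at e1
      rw [if_neg hj2, if_neg (by omega)] at e2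
      -- then update b i S already achieves : contradiction with first move safety
      apply hnm i S hi
      rw [ach_iff]
      refine ⟨p, h, ?_, ?_, ?_⟩
      · rw [upd_mk, if_pos hi0]
      · rwa [upd_mk, if_neg (by omega)]
      · rwa [upd_mk, if_neg (by omega)]
    · -- i not in the block at all
      rw [if_neg hj0, if_neg (fun hh => hi0 hh)] at e0
      by_cases hj1 : p + 1 = j.val
      · -- j at p+1, y = O ; (j,y) winning in b
        have hy : y = O := by rw [if_pos hj1] at e1; exact Option.some_injective _ e1
        rw [if_neg (by omega), if_neg (by omega)] at e2
        apply hnm j y hbj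
        rw [ach_iff]
        refine ⟨p, h, ?_, ?_, ?_⟩
        · rwa [upd_mk, if_neg hj0]
        · rw [upd_mk, if_pos hj1, hy]
        · rwa [upd_mk, if_neg (by omega)]
      · rw [if_neg hj1, if_neg (by omega)] at e1
        by_cases hj2 : p + 2 = j.val
        · have hy : y = O := by rw [if_pos hj2] at e2; exact Option.some_injective _ e2
          apply hnm j y hbj
          rw [ach_iff]
          refine ⟨p, h, ?_, ?_, ?_⟩
          · rwa [upd_mk, if_neg hj0]
          · rwa [upd_mk, if_neg hj1]
          · rw [upd_mk, if_pos hj2, hy]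
        · rw [if_neg hj2, if_neg (by omega)] at e2
          -- neither i nor j in the block: b itself achieves
          exact hnw (by rw [ach_iff]; exact ⟨p, h, e0, e1, e2⟩)

lemma main : ∀ m : ℕ,
    (∀ (n : ℕ) (b : Fin n → Option Letter), ECount b = m → Safe b →
      Force (Achieves [S,O,O]) m false b) ∧
    (∀ (n : ℕ) (b : Fin n → Option Letter), ECount b = m → Safe b →
      ¬ Force (Achieves [S,O,O]) m true b) := by
  intro m
  induction m with
  | zero =>
      constructor
      · intro n b _ _
        simp [Force]
      · intro n b _ _ hF
        simp [Force] at hF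
  | succ m ih =>
      obtain ⟨H1, H2⟩ := ih
      constructor
      · intro n b hc hs
        obtain ⟨i, hi, hmax⟩ := exists_max_empty (n := n) (b := b) (by omega)
        refine ⟨i, S, hi, Or.inr ?_⟩
        have hc' : ECount (Function.update b i (some S)) = m := by
          have := ecount_update hi S; omega
        simpa using H2 n _ hc' (key hs hi hmax)
      · intro n b hc hs hF
        obtain ⟨i, x, hi, hwin⟩ := hF
        rcases hwin with hwin | hnf
        · exact hs.2 i x hi hwin
        have hc' : ECount (Function.update b i (some x)) = m := by
          have := ecount_update hi x; omega
        apply hnf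
        by_cases hth : ∃ j y, Function.update b i (some x) j = none ∧
            Achieves [S,O,O] (Function.update (Function.update b i (some x)) j (some y))
        · obtain ⟨j, y, hj, hwin'⟩ := hth
          match m, hc' with
          | m' + 1, hc' =>
            exact (by exact ⟨j, y, hj, Or.inl hwin'⟩ :
              Force (Achieves [S,O,O]) (m'+1) false _)
        · push_neg at hth
          have hsafe : Safe (Function.update b i (some x)) := by
            refine ⟨hs.2 i x hi, ?_⟩
            intro j y hj
            exact hth j y hj
          simpa using H1 n _ hc' hsafe

end Aux

/-- The normal game on the 1×n board with target string SOO is a draw for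
every `n`: each player can force at least a draw, so neither player can force
a win. -/
theorem soo_game_draw (n : ℕ) : IsDraw [S, O, O] n := by
  have hsafe : Safe (fun _ : Fin n => none) := by
    constructor
    · rw [ach_iff]
      rintro ⟨p, h, e0, -, -⟩
      exact nomatch e0
    · intro i x _ hach
      rw [ach_iff] at hach
      obtain ⟨p, h, e0, e1, e2⟩ := hach
      rw [upd_mk] at e0 e1
      by_cases h0 : p = i.val
      · rw [if_neg (by omega)] at e1
        exact nomatch e1
      · rw [if_neg h0] at e0
        exact nomatch e0
  have hcount : ECount (fun _ : Fin n => none) = n := by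
    simp [ECount]
  exact ⟨(main n).1 n _ hcount hsafe, (main n).2 n _ hcount hsafe⟩
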